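/- Let n ≥ 6 and let f : S_n → ℤ be defined by f(π) = 1 if π({1,2,3}) = {1,2,3} or π({1,2,3}) ∩ {1,2,3} = ∅, and 0 otherwise. Then f is not expressible as a nonnegative linear combination of indicator functions of 2-cosets: there do not exist nonnegative reals b_{α,β}, indexed by pairs (α,β) of ordered pairs of distinct elements of {1,…,n}, with f = Σ b_{α,β} · 1_{T_{α↦β}}. -/

import Mathlib

open Finset

/-- Key auxiliary lemma: for any 3-element set `S` and prescribed values on two points,
there is a permutation realizing those values whose image of `S` both meets `S` and
contains a point outside `S`. -/
lemma exists_perm_aux {n : ℕ} (hn : 6 ≤ n) (S : Finset (Fin n)) (hS : S.card = 3)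
    (a1 a2 b1 b2 : Fin n) (h12 : a1 ≠ a2) (hb12 : b1 ≠ b2) :
    ∃ π : Equiv.Perm (Fin n), π a1 = b1 ∧ π a2 = b2 ∧
      (∃ u ∈ S.image ⇑π, u ∈ S) ∧ (∃ v ∈ S.image ⇑π, v ∉ S) := by
  classical
  -- first find some π₀ with π₀ a1 = b1, π₀ a2 = b2
  set σ := Equiv.swap a1 b1 with hσ
  set x0 := σ a2 with hx0def
  have hx0 : x0 ≠ b1 := by
    intro h
    apply h12
    apply σ.injective
    rw [← hx0def] at *
    rw [h, hσ, Equiv.swap_apply_left]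
  set π₀ := Equiv.swap x0 b2 * σ with hπ₀
  have hπ₀1 : π₀ a1 = b1 := by
    rw [hπ₀, Equiv.Perm.mul_apply, hσ, Equiv.swap_apply_left,
      Equiv.swap_apply_of_ne_of_ne (Ne.symm hx0) hb12]
  have hπ₀2 : π₀ a2 = b2 := by
    rw [hπ₀, Equiv.Perm.mul_apply, ← hx0def, Equiv.swap_apply_left]
  -- pick x ∈ S distinct from a1, a2
  have hxex : (S \ {a1, a2}).Nonempty := by
    rw [Finset.sdiff_nonempty]
    intro hsub
    have := Finset.card_le_card hsub
    rw [hS] at this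
    have h2 : ({a1, a2} : Finset (Fin n)).card ≤ 2 :=
      Finset.card_insert_le _ _ |>.trans (by simp)
    omega
  obtain ⟨x, hx⟩ := hxex
  rw [Finset.mem_sdiff, Finset.mem_insert, Finset.mem_singleton] at hx
  obtain ⟨hxS, hxa⟩ := hx
  push_neg at hxa
  obtain ⟨hxa1, hxa2⟩ := hxa
  -- pick z ∈ S, z ≠ x
  have hzex : (S.erase x).Nonempty := by
    rw [← Finset.card_pos, Finset.card_erase_of_mem hxS, hS]; norm_num
  obtain ⟨z, hz⟩ := hzex
  rw [Finset.mem_erase] at hz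
  obtain ⟨hzx, hzS⟩ := hz
  by_cases hA : S.image ⇑π₀ = S
  · -- case: π₀ maps S onto S; pick y outside S ∪ {a1, a2}
    have hyex : (Finset.univ \ insert a1 (insert a2 S)).Nonempty := by
      rw [Finset.sdiff_nonempty]
      intro hsub
      have h1 := Finset.card_le_card hsub
      have h2 : (insert a1 (insert a2 S)).card ≤ 5 := by
        calc (insert a1 (insert a2 S)).card ≤ (insert a2 S).card + 1 :=
              Finset.card_insert_le _ _
          _ ≤ S.card + 1 + 1 := by have := Finset.card_insert_le a2 S; omega
          _ = 5 := by rw [hS]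
      rw [Finset.card_univ, Fintype.card_fin] at h1
      omega
    obtain ⟨y, hy⟩ := hyex
    rw [Finset.mem_sdiff, Finset.mem_insert, Finset.mem_insert] at hy
    push_neg at hy
    obtain ⟨-, hya1, hya2, hyS⟩ := hy
    refine ⟨π₀ * Equiv.swap x y, ?_, ?_, ⟨π₀ z, ?_, ?_⟩, ⟨π₀ y, ?_, ?_⟩⟩
    · rw [Equiv.Perm.mul_apply,
        Equiv.swap_apply_of_ne_of_ne (Ne.symm hxa1) (Ne.symm hya1), hπ₀1]
    · rw [Equiv.Perm.mul_apply,
        Equiv.swap_apply_of_ne_of_ne (Ne.symm hxa2) (Ne.symm hya2), hπ₀2]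
    · refine Finset.mem_image.2 ⟨z, hzS, ?_⟩
      rw [Equiv.Perm.mul_apply, Equiv.swap_apply_of_ne_of_ne hzx
        (fun h => hyS (by rw [← h]; exact hzS))]
    · rw [← hA]; exact Finset.mem_image.2 ⟨z, hzS, rfl⟩
    · refine Finset.mem_image.2 ⟨x, hxS, ?_⟩
      rw [Equiv.Perm.mul_apply, Equiv.swap_apply_left]
    · intro hmem
      rw [← hA] at hmem
      obtain ⟨s, hsS, hs⟩ := Finset.mem_image.1 hmem
      exact hyS (π₀.injective hs ▸ hsS)
  · by_cases hB : S.image ⇑π₀ ∩ S = ∅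
    · -- case: image disjoint from S; pick y in π₀⁻¹(S) away from a1, a2
      have hdisj : ∀ t, π₀ t ∈ S → t ∉ S := by
        intro t ht htS
        have : π₀ t ∈ S.image ⇑π₀ ∩ S :=
          Finset.mem_inter.2 ⟨Finset.mem_image.2 ⟨t, htS, rfl⟩, ht⟩
        rw [hB] at this
        exact absurd this (Finset.notMem_empty _)
      have hPcard : (S.image ⇑π₀⁻¹).card = 3 := by
        rw [Finset.card_image_of_injective _ π₀⁻¹.injective, hS]
      have hyex : (S.image ⇑π₀⁻¹ \ {a1, a2}).Nonempty := by
        rw [Finset.sdiff_nonempty]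
        intro hsub
        have := Finset.card_le_card hsub
        have h2 : ({a1, a2} : Finset (Fin n)).card ≤ 2 :=
          Finset.card_insert_le _ _ |>.trans (by simp)
        omega
      obtain ⟨y, hy⟩ := hyex
      rw [Finset.mem_sdiff, Finset.mem_insert, Finset.mem_singleton] at hy
      obtain ⟨hyP, hya⟩ := hy
      push_neg at hya
      obtain ⟨hya1, hya2⟩ := hya
      obtain ⟨s, hsS, hs⟩ := Finset.mem_image.1 hyP
      have hπ₀y : π₀ y ∈ S := by rw [← hs]; simpa using hsS
      have hyS : y ∉ S := hdisj y hπ₀y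
      refine ⟨π₀ * Equiv.swap x y, ?_, ?_, ⟨π₀ y, ?_, hπ₀y⟩, ⟨π₀ z, ?_, ?_⟩⟩
      · rw [Equiv.Perm.mul_apply,
          Equiv.swap_apply_of_ne_of_ne (Ne.symm hxa1) (Ne.symm hya1), hπ₀1]
      · rw [Equiv.Perm.mul_apply,
          Equiv.swap_apply_of_ne_of_ne (Ne.symm hxa2) (Ne.symm hya2), hπ₀2]
      · refine Finset.mem_image.2 ⟨x, hxS, ?_⟩
        rw [Equiv.Perm.mul_apply, Equiv.swap_apply_left]
      · refine Finset.mem_image.2 ⟨z, hzS, ?_⟩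
        rw [Equiv.Perm.mul_apply, Equiv.swap_apply_of_ne_of_ne hzx
          (fun h => hyS (by rw [← h]; exact hzS))]
      · intro hmem
        have : π₀ z ∈ S.image ⇑π₀ ∩ S :=
          Finset.mem_inter.2 ⟨Finset.mem_image.2 ⟨z, hzS, rfl⟩, hmem⟩
        rw [hB] at this
        exact absurd this (Finset.notMem_empty _)
    · -- neither: π₀ itself works
      have hcard : (S.image ⇑π₀).card = 3 := by
        rw [Finset.card_image_of_injective _ π₀.injective, hS]
      have hnotsub : ¬ S.image ⇑π₀ ⊆ S := by
        intro hsub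
        exact hA (Finset.eq_of_subset_of_card_le hsub (by omega))
      rw [Finset.not_subset] at hnotsub
      obtain ⟨v, hv1, hv2⟩ := hnotsub
      have hne : (S.image ⇑π₀ ∩ S).Nonempty := Finset.nonempty_iff_ne_empty.2 hB
      obtain ⟨u, hu⟩ := hne
      rw [Finset.mem_inter] at hu
      exact ⟨π₀, hπ₀1, hπ₀2, ⟨u, hu.1, hu.2⟩, ⟨v, hv1, hv2⟩⟩

theorem stmt11 (n : ℕ) (hn : 6 ≤ n)
    (a b c : Fin n) (ha : (a : ℕ) = 0) (hb : (b : ℕ) = 1) (hc : (c : ℕ) = 2)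
    (f : Equiv.Perm (Fin n) → ℝ)
    (hf : ∀ π, f π =
      (if Finset.image ⇑π {a, b, c} = ({a, b, c} : Finset (Fin n)) ∨
          Finset.image ⇑π {a, b, c} ∩ ({a, b, c} : Finset (Fin n)) = ∅
        then 1 else 0)) :
    ¬ ∃ coef : (Fin n × Fin n) → (Fin n × Fin n) → ℝ,
        (∀ α β, 0 ≤ coef α β) ∧
        ∀ π : Equiv.Perm (Fin n),
          f π = ∑ α ∈ Finset.univ.filter (fun p : Fin n × Fin n => p.1 ≠ p.2),
                  ∑ β ∈ Finset.univ.filter (fun p : Fin n × Fin n => p.1 ≠ p.2),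
                    coef α β * (if π α.1 = β.1 ∧ π α.2 = β.2 then 1 else 0) := by
  classical
  rintro ⟨coef, hpos, hsum⟩
  have hab : a ≠ b := fun h => by rw [h] at ha; omega
  have hac : a ≠ c := fun h => by rw [h] at ha; omega
  have hbc : b ≠ c := fun h => by rw [h] at hb; omega
  set S : Finset (Fin n) := {a, b, c} with hSdef
  have hScard : S.card = 3 := by
    rw [hSdef, Finset.card_insert_of_notMem (by simp [hab, hac]),
      Finset.card_insert_of_notMem (by simp [hbc]), Finset.card_singleton]
  -- every coefficient is zero
  have hzero : ∀ p q : Fin n × Fin n, p.1 ≠ p.2 → q.1 ≠ q.2 → coef p q = 0 := by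
    intro p q hp hq
    obtain ⟨π, hπ1, hπ2, ⟨u, hu1, hu2⟩, ⟨v, hv1, hv2⟩⟩ :=
      exists_perm_aux hn S hScard p.1 p.2 q.1 q.2 hp hq
    have hfπ : f π = 0 := by
      rw [hf π, if_neg]
      push_neg
      constructor
      · intro h; rw [h] at hv1; exact hv2 hv1
      · apply Finset.nonempty_iff_ne_empty.2; intro h
        have : u ∈ S.image ⇑π ∩ S := Finset.mem_inter.2 ⟨hu1, hu2⟩
        rw [h] at this
        exact absurd this (Finset.notMem_empty _)
    have hnn : ∀ α ∈ Finset.univ.filter (fun p : Fin n × Fin n => p.1 ≠ p.2),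
        0 ≤ ∑ β ∈ Finset.univ.filter (fun p : Fin n × Fin n => p.1 ≠ p.2),
          coef α β * (if π α.1 = β.1 ∧ π α.2 = β.2 then 1 else 0) := by
      intro α _
      apply Finset.sum_nonneg
      intro β _
      apply mul_nonneg (hpos α β)
      split <;> norm_num
    have hs := (hsum π).symm
    rw [hfπ] at hs
    have hp' : p ∈ Finset.univ.filter (fun p : Fin n × Fin n => p.1 ≠ p.2) := by
      simp [hp]
    have hq' : q ∈ Finset.univ.filter (fun p : Fin n × Fin n => p.1 ≠ p.2) := by
      simp [hq]
    have hinner := (Finset.sum_eq_zero_iff_of_nonneg hnn).1 hs p hp'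
    have hnn2 : ∀ β ∈ Finset.univ.filter (fun p : Fin n × Fin n => p.1 ≠ p.2),
        0 ≤ coef p β * (if π p.1 = β.1 ∧ π p.2 = β.2 then 1 else 0) := by
      intro β _
      apply mul_nonneg (hpos p β)
      split <;> norm_num
    have hterm := (Finset.sum_eq_zero_iff_of_nonneg hnn2).1 hinner q hq'
    rw [if_pos ⟨hπ1, hπ2⟩, mul_one] at hterm
    exact hterm
  -- evaluate at the identity
  have h1 : f 1 = 1 := by
    rw [hf 1, if_pos]
    left
    simp
  have h0 := hsum 1
  rw [h1] at h0
  have : (1 : ℝ) = 0 := by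
    rw [h0]
    apply Finset.sum_eq_zero
    intro p hp
    apply Finset.sum_eq_zero
    intro q hq
    rw [Finset.mem_filter] at hp hq
    rw [hzero p q hp.2 hq.2, zero_mul]
  norm_num at this
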